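/- arXiv:2506.11411 — 2 statements merged into one kernel-verified Lean document; each statement's English description precedes it below -/
import Mathlib

section
/- Let f : ℝⁿ × ℝᵐ → ℝⁿ and h : ℝⁿ × ℝᵐ → ℝᵐ be continuously differentiable, let P be symmetric positive definite, ε > 0, and X a symmetric 2m×2m matrix. Suppose at every point (x,u) in a set D the matrix inequality [[P·∂f/∂x + (∂f/∂x)ᵀ·P + εI, P·∂f/∂u],[(∂f/∂u)ᵀ·P, 0]] − [[0, I],[∂h/∂x, ∂h/∂u]]ᵀ X [[0, I],[∂h/∂x, ∂h/∂u]] ⪯ 0 holds. Then along any C¹ trajectory (x(t), u(t)) remaining in D with ẋ = f(x,u) and y = h(x,u), the storage function S(x,u) = f(x,u)ᵀ P f(x,u) satisfies dS/dt ≤ [u̇; ẏ]ᵀ X [u̇; ẏ] − ε‖f(x,u)‖². -/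
open Matrix

private lemma dot_transpose_mulVec {p q : Type*} [Fintype p] [Fintype q]
    (A : Matrix p q ℝ) (v : q → ℝ) (w : p → ℝ) :
    v ⬝ᵥ Aᵀ *ᵥ w = (A *ᵥ v) ⬝ᵥ w := by
  rw [dotProduct_mulVec, vecMul_transpose]

/-- Krasovskii-type certificate for delta dissipativity of a nonlinear system
`ẋ = f(x,u)`, `y = h(x,u)`.  The Jacobians of `f` and `h` are given by the
matrix-valued functions `Jfx, Jfu, Jhx, Jhu`, and the chain rule along the
trajectory is recorded as hypotheses. -/
theorem stmt_1 {n m : ℕ}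
    (f : (Fin n → ℝ) → (Fin m → ℝ) → (Fin n → ℝ))
    (h : (Fin n → ℝ) → (Fin m → ℝ) → (Fin m → ℝ))
    (Jfx : (Fin n → ℝ) → (Fin m → ℝ) → Matrix (Fin n) (Fin n) ℝ)
    (Jfu : (Fin n → ℝ) → (Fin m → ℝ) → Matrix (Fin n) (Fin m) ℝ)
    (Jhx : (Fin n → ℝ) → (Fin m → ℝ) → Matrix (Fin m) (Fin n) ℝ)
    (Jhu : (Fin n → ℝ) → (Fin m → ℝ) → Matrix (Fin m) (Fin m) ℝ)
    (P : Matrix (Fin n) (Fin n) ℝ) (hP : P.PosDef)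
    (ε : ℝ) (hε : 0 < ε)
    (X : Matrix (Fin m ⊕ Fin m) (Fin m ⊕ Fin m) ℝ) (hX : X.IsSymm)
    (D : Set ((Fin n → ℝ) × (Fin m → ℝ)))
    -- the matrix inequality holds at every point of D
    (hLMI : ∀ p ∈ D,
      let M : Matrix (Fin n ⊕ Fin m) (Fin n ⊕ Fin m) ℝ :=
        Matrix.fromBlocks
          (P * Jfx p.1 p.2 + (Jfx p.1 p.2)ᵀ * P + ε • (1 : Matrix (Fin n) (Fin n) ℝ))
          (P * Jfu p.1 p.2) ((Jfu p.1 p.2)ᵀ * P) 0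
      let N : Matrix (Fin m ⊕ Fin m) (Fin n ⊕ Fin m) ℝ :=
        Matrix.fromBlocks (0 : Matrix (Fin m) (Fin n) ℝ) (1 : Matrix (Fin m) (Fin m) ℝ)
          (Jhx p.1 p.2) (Jhu p.1 p.2)
      (Nᵀ * X * N - M).PosSemidef)
    -- a C¹ trajectory remaining in D with ẋ = f(x,u), y = h(x,u)
    (x : ℝ → Fin n → ℝ) (u : ℝ → Fin m → ℝ) (y : ℝ → Fin m → ℝ)
    (x' : ℝ → Fin n → ℝ) (u' : ℝ → Fin m → ℝ) (y' : ℝ → Fin m → ℝ)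
    (hx : ∀ t i, HasDerivAt (fun τ => x τ i) (x' t i) t)
    (hu : ∀ t i, HasDerivAt (fun τ => u τ i) (u' t i) t)
    (hy : ∀ t i, HasDerivAt (fun τ => y τ i) (y' t i) t)
    (hdyn : ∀ t, x' t = f (x t) (u t))
    (hout : ∀ t, y t = h (x t) (u t))
    -- chain rule along the trajectory for f and h, via their Jacobians
    (hchainf : ∀ t i, HasDerivAt (fun τ => f (x τ) (u τ) i)
      ((Jfx (x t) (u t)).mulVec (x' t) i + (Jfu (x t) (u t)).mulVec (u' t) i) t)
    (hchainh : ∀ t, y' t =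
      (Jhx (x t) (u t)).mulVec (x' t) + (Jhu (x t) (u t)).mulVec (u' t))
    (hD : ∀ t, (x t, u t) ∈ D) :
    -- the storage function S = fᵀ P f satisfies Ṡ ≤ [u̇;ẏ]ᵀ X [u̇;ẏ] − ε‖f‖²
    ∀ t s, HasDerivAt (fun τ => f (x τ) (u τ) ⬝ᵥ P.mulVec (f (x τ) (u τ))) s t →
      s ≤ Sum.elim (u' t) (y' t) ⬝ᵥ X.mulVec (Sum.elim (u' t) (y' t))
          - ε * (f (x t) (u t) ⬝ᵥ f (x t) (u t)) := by
  intro t s hs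
  set v : Fin n → ℝ := f (x t) (u t) with hv
  set w : Fin m → ℝ := u' t with hw
  set A := Jfx (x t) (u t)
  set B := Jfu (x t) (u t)
  set d : Fin n → ℝ := fun i => A.mulVec (x' t) i + B.mulVec (u' t) i with hd
  -- compute the derivative of S along the trajectory
  have hS : HasDerivAt (fun τ => f (x τ) (u τ) ⬝ᵥ P.mulVec (f (x τ) (u τ)))
      (d ⬝ᵥ P.mulVec v + v ⬝ᵥ P.mulVec d) t := by
    have key : HasDerivAt
        (fun τ => ∑ i, f (x τ) (u τ) i * ∑ j, P i j * f (x τ) (u τ) j)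
        (∑ i, (d i * ∑ j, P i j * v j + v i * ∑ j, P i j * d j)) t := by
      apply HasDerivAt.fun_sum
      intro i _
      exact (hchainf t i).mul (HasDerivAt.fun_sum fun j _ => (hchainf t j).const_mul (P i j))
    have e1 : (fun τ => f (x τ) (u τ) ⬝ᵥ P.mulVec (f (x τ) (u τ)))
        = fun τ => ∑ i, f (x τ) (u τ) i * ∑ j, P i j * f (x τ) (u τ) j := by
      funext τ; simp [dotProduct, mulVec]
    have e2 : (∑ i, (d i * ∑ j, P i j * v j + v i * ∑ j, P i j * d j))
        = d ⬝ᵥ P.mulVec v + v ⬝ᵥ P.mulVec d := by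
      simp [dotProduct, mulVec, Finset.sum_add_distrib]
    rw [e1, ← e2]
    exact key
  have hsval : s = d ⬝ᵥ P.mulVec v + v ⬝ᵥ P.mulVec d := hs.unique hS
  -- the LMI at the current point
  have h0 := hLMI (x t, u t) (hD t)
  simp only at h0
  set M : Matrix (Fin n ⊕ Fin m) (Fin n ⊕ Fin m) ℝ :=
    Matrix.fromBlocks (P * A + Aᵀ * P + ε • (1 : Matrix (Fin n) (Fin n) ℝ))
      (P * B) (Bᵀ * P) 0 with hM
  set N : Matrix (Fin m ⊕ Fin m) (Fin n ⊕ Fin m) ℝ :=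
    Matrix.fromBlocks (0 : Matrix (Fin m) (Fin n) ℝ) (1 : Matrix (Fin m) (Fin m) ℝ)
      (Jhx (x t) (u t)) (Jhu (x t) (u t)) with hN
  set z : Fin n ⊕ Fin m → ℝ := Sum.elim v w with hz
  have hpos := h0.dotProduct_mulVec_nonneg z
  have hstar : star z = z := rfl
  rw [hstar] at hpos
  have hNz : N *ᵥ z = Sum.elim w (y' t) := by
    rw [hN, hz, fromBlocks_mulVec]
    have := hchainh t
    rw [hdyn t] at this
    simp [this, ← hv, ← hw]
  have hquad : z ⬝ᵥ (Nᵀ * X * N) *ᵥ z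
      = Sum.elim (u' t) (y' t) ⬝ᵥ X *ᵥ Sum.elim (u' t) (y' t) := by
    rw [← Matrix.mulVec_mulVec, ← Matrix.mulVec_mulVec, dot_transpose_mulVec, hNz, ← hw]
  have hMz : z ⬝ᵥ M *ᵥ z = s + ε * (v ⬝ᵥ v) := by
    have hdv : d = A *ᵥ v + B *ᵥ w := by
      funext i; simp [hd, hdyn t, ← hv, ← hw]
    rw [hsval, hM, hz, fromBlocks_mulVec, sumElim_dotProduct_sumElim]
    simp only [Matrix.add_mulVec, Matrix.smul_mulVec, Matrix.one_mulVec,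
      Matrix.zero_mulVec, add_zero, ← Matrix.mulVec_mulVec, dotProduct_add,
      dotProduct_smul, dot_transpose_mulVec, hdv, Matrix.mulVec_add]
    ring_nf
    simp [smul_eq_mul]
    ring
  have hsub : z ⬝ᵥ (Nᵀ * X * N - M) *ᵥ z = z ⬝ᵥ (Nᵀ * X * N) *ᵥ z - z ⬝ᵥ M *ᵥ z := by
    rw [Matrix.sub_mulVec, dotProduct_sub]
  rw [hsub, hquad, hMz] at hpos
  linarith
end

section
/- Let A ∈ ℝⁿˣⁿ, B ∈ ℝⁿˣᵐ, C ∈ ℝᵐˣⁿ, D ∈ ℝᵐˣᵐ, P symmetric positive definite, ε > 0, and X symmetric. If [[PA + AᵀP + εI, PB],[BᵀP, 0]] − [[0, I],[C, D]]ᵀ X [[0, I],[C, D]] ⪯ 0, then along any C¹ trajectory with ẋ = Ax + Bu and y = Cx + Du, the function S(x,u) = (Ax+Bu)ᵀ P (Ax+Bu) satisfies dS/dt ≤ [u̇; ẏ]ᵀ X [u̇; ẏ] − ε‖Ax + Bu‖² for all (x,u) ∈ ℝⁿ × ℝᵐ. -/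
open Matrix

private lemma hasDerivAt_mulVec' {k l : ℕ} (M : Matrix (Fin k) (Fin l) ℝ)
    (v : ℝ → Fin l → ℝ) (v' : Fin l → ℝ) (t : ℝ)
    (hv : ∀ j, HasDerivAt (fun τ => v τ j) (v' j) t) (i : Fin k) :
    HasDerivAt (fun τ => M.mulVec (v τ) i) (M.mulVec v' i) t := by
  simp only [Matrix.mulVec, dotProduct]
  exact HasDerivAt.fun_sum fun j _ => (hv j).const_mul _

private lemma hasDerivAt_quad {k : ℕ} (P : Matrix (Fin k) (Fin k) ℝ)
    (z : ℝ → Fin k → ℝ) (z' : Fin k → ℝ) (t : ℝ)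
    (hz : ∀ i, HasDerivAt (fun τ => z τ i) (z' i) t) :
    HasDerivAt (fun τ => z τ ⬝ᵥ P.mulVec (z τ))
      (z' ⬝ᵥ P.mulVec (z t) + z t ⬝ᵥ P.mulVec z') t := by
  simp only [Matrix.mulVec, dotProduct]
  rw [← Finset.sum_add_distrib]
  refine HasDerivAt.fun_sum fun i _ => ?_
  have h2 : HasDerivAt (fun τ => ∑ j, P i j * z τ j) (∑ j, P i j * z' j) t :=
    HasDerivAt.fun_sum fun j _ => (hz j).const_mul _
  exact (hz i).mul h2

private lemma symm_dot {k : ℕ} (P : Matrix (Fin k) (Fin k) ℝ) (hP : Pᵀ = P)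
    (a b : Fin k → ℝ) : a ⬝ᵥ P.mulVec b = b ⬝ᵥ P.mulVec a := by
  rw [Matrix.dotProduct_mulVec, dotProduct_comm]
  conv_lhs => rw [← hP, Matrix.vecMul_transpose]

/-- LTI specialization of the Krasovskii-type delta dissipativity certificate for
`ẋ = Ax + Bu`, `y = Cx + Du`. -/
theorem stmt_2 {n m : ℕ}
    (A : Matrix (Fin n) (Fin n) ℝ) (B : Matrix (Fin n) (Fin m) ℝ)
    (C : Matrix (Fin m) (Fin n) ℝ) (Dm : Matrix (Fin m) (Fin m) ℝ)
    (P : Matrix (Fin n) (Fin n) ℝ) (hP : P.PosDef)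
    (ε : ℝ) (hε : 0 < ε)
    (X : Matrix (Fin m ⊕ Fin m) (Fin m ⊕ Fin m) ℝ) (hX : X.IsSymm)
    (hLMI :
      let M : Matrix (Fin n ⊕ Fin m) (Fin n ⊕ Fin m) ℝ :=
        Matrix.fromBlocks (P * A + Aᵀ * P + ε • (1 : Matrix (Fin n) (Fin n) ℝ))
          (P * B) (Bᵀ * P) 0
      let N : Matrix (Fin m ⊕ Fin m) (Fin n ⊕ Fin m) ℝ :=
        Matrix.fromBlocks (0 : Matrix (Fin m) (Fin n) ℝ) (1 : Matrix (Fin m) (Fin m) ℝ) C Dm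
      (Nᵀ * X * N - M).PosSemidef)
    -- an arbitrary C¹ trajectory of the linear system
    (x : ℝ → Fin n → ℝ) (u : ℝ → Fin m → ℝ) (y : ℝ → Fin m → ℝ)
    (x' : ℝ → Fin n → ℝ) (u' : ℝ → Fin m → ℝ) (y' : ℝ → Fin m → ℝ)
    (hx : ∀ t i, HasDerivAt (fun τ => x τ i) (x' t i) t)
    (hu : ∀ t i, HasDerivAt (fun τ => u τ i) (u' t i) t)
    (hy : ∀ t i, HasDerivAt (fun τ => y τ i) (y' t i) t)
    (hdyn : ∀ t, x' t = A.mulVec (x t) + B.mulVec (u t))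
    (hout : ∀ t, y t = C.mulVec (x t) + Dm.mulVec (u t)) :
    -- S(x,u) = (Ax+Bu)ᵀ P (Ax+Bu) satisfies Ṡ ≤ [u̇;ẏ]ᵀ X [u̇;ẏ] − ε‖Ax+Bu‖²
    ∀ t s, HasDerivAt (fun τ =>
        (A.mulVec (x τ) + B.mulVec (u τ)) ⬝ᵥ P.mulVec (A.mulVec (x τ) + B.mulVec (u τ))) s t →
      s ≤ Sum.elim (u' t) (y' t) ⬝ᵥ X.mulVec (Sum.elim (u' t) (y' t))
          - ε * ((A.mulVec (x t) + B.mulVec (u t)) ⬝ᵥ (A.mulVec (x t) + B.mulVec (u t))) := by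
  intro t s hS
  set a : Fin n → ℝ := x' t with ha
  set b : Fin m → ℝ := u' t with hb
  set z' : Fin n → ℝ := A.mulVec a + B.mulVec b with hz'def
  -- componentwise derivative of z(τ) = A x(τ) + B u(τ)
  have hz : ∀ i, HasDerivAt (fun τ => (A.mulVec (x τ) + B.mulVec (u τ)) i) (z' i) t := by
    intro i
    have := (hasDerivAt_mulVec' A x a t (hx t) i).fun_add (hasDerivAt_mulVec' B u b t (hu t) i)
    simpa [hz'def] using this
  have hzt : A.mulVec (x t) + B.mulVec (u t) = a := (hdyn t).symm
  have hS' : HasDerivAt (fun τ =>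
      (A.mulVec (x τ) + B.mulVec (u τ)) ⬝ᵥ P.mulVec (A.mulVec (x τ) + B.mulVec (u τ)))
      (z' ⬝ᵥ P.mulVec a + a ⬝ᵥ P.mulVec z') t := by
    have := hasDerivAt_quad P (fun τ => A.mulVec (x τ) + B.mulVec (u τ)) z' t hz
    simpa [hzt] using this
  have hs_eq : s = z' ⬝ᵥ P.mulVec a + a ⬝ᵥ P.mulVec z' := hS.unique hS'
  -- derivative of the output
  have hy' : y' t = C.mulVec a + Dm.mulVec b := by
    funext i
    have h1 : HasDerivAt (fun τ => y τ i) ((C.mulVec a + Dm.mulVec b) i) t := by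
      have h2 := (hasDerivAt_mulVec' C x a t (hx t) i).fun_add (hasDerivAt_mulVec' Dm u b t (hu t) i)
      have : (fun τ => y τ i) = fun τ => C.mulVec (x τ) i + Dm.mulVec (u τ) i := by
        funext τ; rw [hout τ]; rfl
      rw [this]
      simpa using h2
    exact (hy t i).unique h1
  -- apply the LMI to w = (x'(t), u'(t))
  have hpos : ((Matrix.fromBlocks (0 : Matrix (Fin m) (Fin n) ℝ)
        (1 : Matrix (Fin m) (Fin m) ℝ) C Dm)ᵀ * X *
        Matrix.fromBlocks (0 : Matrix (Fin m) (Fin n) ℝ) (1 : Matrix (Fin m) (Fin m) ℝ) C Dm -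
      Matrix.fromBlocks (P * A + Aᵀ * P + ε • (1 : Matrix (Fin n) (Fin n) ℝ))
        (P * B) (Bᵀ * P) 0).PosSemidef := hLMI
  set N : Matrix (Fin m ⊕ Fin m) (Fin n ⊕ Fin m) ℝ :=
    Matrix.fromBlocks (0 : Matrix (Fin m) (Fin n) ℝ) (1 : Matrix (Fin m) (Fin m) ℝ) C Dm with hN
  set Mm : Matrix (Fin n ⊕ Fin m) (Fin n ⊕ Fin m) ℝ :=
    Matrix.fromBlocks (P * A + Aᵀ * P + ε • (1 : Matrix (Fin n) (Fin n) ℝ))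
      (P * B) (Bᵀ * P) 0 with hMm
  set w : Fin n ⊕ Fin m → ℝ := Sum.elim a b with hw
  have h0 : 0 ≤ w ⬝ᵥ (Nᵀ * X * N - Mm).mulVec w := by
    have := hpos.dotProduct_mulVec_nonneg w
    simpa using this
  have hNw : N.mulVec w = Sum.elim b (y' t) := by
    rw [hw, hN, Matrix.fromBlocks_mulVec, hy']
    simp
  have hXpart : w ⬝ᵥ (Nᵀ * X * N).mulVec w
      = Sum.elim (u' t) (y' t) ⬝ᵥ X.mulVec (Sum.elim (u' t) (y' t)) := by
    rw [← Matrix.mulVec_mulVec, ← Matrix.mulVec_mulVec, Matrix.dotProduct_mulVec,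
      Matrix.vecMul_transpose, hNw]
  have hMpart : w ⬝ᵥ Mm.mulVec w = s + ε * (a ⬝ᵥ a) := by
    rw [hw, hMm, Matrix.fromBlocks_mulVec, sumElim_dotProduct_sumElim]
    have e1 : a ⬝ᵥ Aᵀ.mulVec (P.mulVec a) = (A.mulVec a) ⬝ᵥ P.mulVec a := by
      rw [Matrix.dotProduct_mulVec, Matrix.vecMul_transpose]
    have e2 : b ⬝ᵥ Bᵀ.mulVec (P.mulVec a) = (B.mulVec b) ⬝ᵥ P.mulVec a := by
      rw [Matrix.dotProduct_mulVec, Matrix.vecMul_transpose]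
    rw [hs_eq, hz'def]
    simp only [Matrix.add_mulVec, Matrix.mulVec_add, dotProduct_add, add_dotProduct, e1, e2,
      ← Matrix.mulVec_mulVec, Matrix.smul_mulVec, Matrix.one_mulVec,
      dotProduct_smul, Matrix.zero_mulVec, dotProduct_zero, smul_eq_mul,
      Matrix.mulVec_zero, Sum.elim_comp_inl, Sum.elim_comp_inr]
    ring
  rw [Matrix.sub_mulVec, dotProduct_sub, hXpart, hMpart] at h0
  rw [hzt]
  linarith
end
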